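/- Let n ≥ 1, λ a partition of length at most 2n, and T ∈ SST_{2n}(λ). Set μ := shape of suc(T). Then μ ⊆ λ and λ/μ is a vertical strip; moreover μ = λ if and only if suc(T) = T. -/

import Mathlib

/-- `part lam i` : the `i`-th part (1-indexed) of the partition `lam`,
with `lam_i = 0` for `i > ℓ(lam)`. -/
def part (lam : List ℕ) (i : ℕ) : ℕ := lam.getD (i - 1) 0

/-- A partition: a weakly decreasing finite sequence of positive integers. -/
def IsPartition (lam : List ℕ) : Prop :=
  lam.Pairwise (· ≥ ·) ∧ ∀ x ∈ lam, 0 < x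

/-- `remAux` computes the set of removable entries of a strictly increasing
sequence, given as a list in *reversed* order (so the head is the last entry). -/
def remAux : List ℕ → Finset ℕ
  | [] => ∅
  | [_] => ∅
  | b :: a :: rest =>
    if Even b ∧ a + 1 = b ∧ b + (remAux rest).card + 1 < 2 * (rest.length + 2) then
      insert a (insert b (remAux rest))
    else remAux (a :: rest)

/-- `remSet 𝐚` : the set `Rem(𝐚)` of removable entries of the strictly
increasing sequence `𝐚 = (a_1, …, a_l)` (given in its natural order). -/
def remSet (l : List ℕ) : Finset ℕ := remAux l.reverse

/-- `redSeq 𝐚` : the reduction `red(𝐚)`, i.e. `𝐚` with the removable entries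
removed. -/
def redSeq (l : List ℕ) : List ℕ := l.filter (fun x => decide (x ∉ remSet l))

/-!  We represent a semistandard tableau by its list of columns (left to
right), each column being the list of its entries read from top to bottom. -/

/-- Column insertion `w → T` of `w` into the tableau `T` (given as a list of
columns): `w` is inserted into the first column, bumping the smallest entry
`≥ w` into the next column, and so on; the last bumped entry is placed at the
bottom of the first column that accommodates it. -/
def colInsert (w : ℕ) : List (List ℕ) → List (List ℕ)
  | [] => [[w]]
  | c :: rest =>
    match c.dropWhile (fun y => decide (y < w)) with
    | [] => (c ++ [w]) :: rest
    | x :: c₂ => (c.takeWhile (fun y => decide (y < w)) ++ w :: c₂) :: colInsert x rest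

/-- Insert the entries of the column `b = (b_1, …, b_k)` (top to bottom)
successively into `T`; this is the plactic product `b * T`. -/
def insertCol (b : List ℕ) (T : List (List ℕ)) : List (List ℕ) :=
  b.foldl (fun t w => colInsert w t) T

/-- The successor map: `suc T = red(𝐚) * T'`, where `𝐚` is the first column
of `T` and `T'` consists of the remaining columns. -/
def suc : List (List ℕ) → List (List ℕ)
  | [] => []
  | c :: rest => insertCol (redSeq c) rest

/-- `rowLen T i` : the length `λ_i` of the `i`-th row of the tableau `T`,
i.e. the number of columns of length `≥ i`. -/
def rowLen (T : List (List ℕ)) (i : ℕ) : ℕ :=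
  T.countP (fun c => decide (i ≤ c.length))

/-- Validity of the column representation of a semistandard tableau with
entries in `[1, m]`: columns are nonempty and strictly increasing (top to
bottom) with entries in `[1, m]`, column lengths weakly decrease from left to
right, and rows weakly increase from left to right. -/
def IsTableau (m : ℕ) (T : List (List ℕ)) : Prop :=
  (∀ c ∈ T, c ≠ []) ∧
  (∀ c ∈ T, c.Chain' (· < ·)) ∧
  (∀ c ∈ T, ∀ x ∈ c, 1 ≤ x ∧ x ≤ m) ∧
  T.Chain' (fun c c' => c'.length ≤ c.length ∧
    ∀ r < c'.length, c.getD r 0 ≤ c'.getD r 0)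

/-- `T` has shape `lam`. -/
def hasShape (T : List (List ℕ)) (lam : List ℕ) : Prop :=
  ∀ i, 1 ≤ i → rowLen T i = part lam i

/-- `T` is symplectic: the entry in the `k`-th row of the first column is
at least `2k - 1`. -/
def IsSymplectic (T : List (List ℕ)) : Prop :=
  ∀ k, 1 ≤ k → k ≤ (T.headD []).length → 2 * k - 1 ≤ (T.headD []).getD (k - 1) 0

namespace S17
open List

abbrev pLt (w : ℕ) : ℕ → Bool := fun y => decide (y < w)

/-- landing index (0-based) of `w` in column `l` -/
def qIdx (w : ℕ) (l : List ℕ) : ℕ := (l.takeWhile (pLt w)).length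

lemma tw_eq_take (w : ℕ) (l : List ℕ) : l.takeWhile (pLt w) = l.take (qIdx w l) :=
  prefix_iff_eq_take.mp (takeWhile_prefix _)

lemma qIdx_le (w : ℕ) (l : List ℕ) : qIdx w l ≤ l.length :=
  (takeWhile_prefix (pLt w) (l := l)).sublist.length_le

lemma dw_eq_drop (w : ℕ) (l : List ℕ) : l.dropWhile (pLt w) = l.drop (qIdx w l) := by
  have h1 : l.takeWhile (pLt w) ++ l.dropWhile (pLt w) = l := takeWhile_append_dropWhile
  have h2 : l.take (qIdx w l) ++ l.drop (qIdx w l) = l := take_append_drop _ _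
  rw [tw_eq_take] at h1
  exact List.append_cancel_left (h1.trans h2.symm)

lemma getD_lt_of_lt_qIdx (w : ℕ) (l : List ℕ) {i : ℕ} (hi : i < qIdx w l) :
    l.getD i 0 < w := by
  have hlen : i < l.length := lt_of_lt_of_le hi (qIdx_le w l)
  have : l.getD i 0 ∈ l.takeWhile (pLt w) := by
    rw [tw_eq_take]
    rw [List.getD_eq_getElem _ _ hlen]
    have : i < (l.take (qIdx w l)).length := by
      rw [List.length_take]; omega
    have hg : (l.take (qIdx w l))[i] = l[i] := List.getElem_take ..
    rw [← hg]
    exact List.getElem_mem this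
  have := List.mem_takeWhile_imp this
  simpa using this

lemma not_lt_getD_qIdx (w : ℕ) (l : List ℕ) (h : qIdx w l < l.length) :
    w ≤ l.getD (qIdx w l) 0 := by
  have hne : l.dropWhile (pLt w) ≠ [] := by
    rw [dw_eq_drop]
    simp only [ne_eq, List.drop_eq_nil_iff]
    omega
  have := List.head_dropWhile_not (pLt w) hne
  have hh : (l.dropWhile (pLt w)).head hne = l.getD (qIdx w l) 0 := by
    have hd := dw_eq_drop w l
    simp only [hd]
    rw [List.getD_eq_getElem _ _ h, List.head_drop]
  rw [hh] at this
  simpa using this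

lemma qIdx_lt_of_dw_ne (w : ℕ) (l : List ℕ) (h : l.dropWhile (pLt w) ≠ []) :
    qIdx w l < l.length := by
  rw [dw_eq_drop] at h
  simp only [ne_eq, List.drop_eq_nil_iff] at h
  omega

lemma dw_cons_eq (w : ℕ) (l : List ℕ) {x : ℕ} {c₂ : List ℕ}
    (h : l.dropWhile (pLt w) = x :: c₂) :
    x = l.getD (qIdx w l) 0 ∧ c₂ = l.drop (qIdx w l + 1) ∧ qIdx w l < l.length := by
  have hlt : qIdx w l < l.length := qIdx_lt_of_dw_ne w l (by rw [h]; simp)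
  rw [dw_eq_drop] at h
  have hx : l.drop (qIdx w l) = l.getD (qIdx w l) 0 :: l.drop (qIdx w l + 1) := by
    rw [List.getD_eq_getElem _ _ hlt]
    exact List.drop_eq_getElem_cons hlt
  rw [h] at hx
  exact ⟨(List.cons.injEq ..  ▸ hx).1, (List.cons.injEq .. ▸ hx).2, hlt⟩

lemma bump_col_eq_set (w : ℕ) (l : List ℕ) {x : ℕ} {c₂ : List ℕ}
    (h : l.dropWhile (pLt w) = x :: c₂) :
    l.takeWhile (pLt w) ++ w :: c₂ = l.set (qIdx w l) w := by
  obtain ⟨hx, hc₂, hlt⟩ := dw_cons_eq w l h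
  rw [tw_eq_take, hc₂, List.set_eq_take_append_cons_drop]
  simp [hlt]

/-- strict chains: getD monotone -/
lemma chainLt_getD_lt {l : List ℕ} (h : l.Chain' (· < ·)) {i j : ℕ}
    (hij : i < j) (hj : j < l.length) : l.getD i 0 < l.getD j 0 := by
  have hp := List.isChain_iff_pairwise.mp h
  rw [List.pairwise_iff_getElem] at hp
  have hi : i < l.length := lt_trans hij hj
  rw [List.getD_eq_getElem _ _ hi, List.getD_eq_getElem _ _ hj]
  exact hp i j hi hj hij

lemma chainLt_getD_le {l : List ℕ} (h : l.Chain' (· < ·)) {i j : ℕ}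
    (hij : i ≤ j) (hj : j < l.length) : l.getD i 0 ≤ l.getD j 0 := by
  rcases eq_or_lt_of_le hij with rfl | hlt
  · exact le_refl _
  · exact le_of_lt (chainLt_getD_lt h hlt hj)

lemma colInsert_nil (w : ℕ) : colInsert w [] = [[w]] := rfl

lemma colInsert_cons_app (w : ℕ) (c : List ℕ) (rest : List (List ℕ))
    (h : c.dropWhile (pLt w) = []) :
    colInsert w (c :: rest) = (c ++ [w]) :: rest := by
  simp only [colInsert, pLt] at h ⊢
  rw [h]

lemma colInsert_cons_bump (w : ℕ) (c : List ℕ) (rest : List (List ℕ)) {x : ℕ} {c₂ : List ℕ}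
    (h : c.dropWhile (pLt w) = x :: c₂) :
    colInsert w (c :: rest) = (c.set (qIdx w c) w) :: colInsert x rest := by
  have hs := bump_col_eq_set w c h
  simp only [colInsert, pLt] at h ⊢
  rw [h]
  simp only [← hs, pLt]


def colRel (c c' : List ℕ) : Prop :=
  c'.length ≤ c.length ∧ ∀ r < c'.length, c.getD r 0 ≤ c'.getD r 0

def newRow (w : ℕ) : List (List ℕ) → ℕ
  | [] => 1
  | c :: rest =>
    match c.dropWhile (fun y => decide (y < w)) with
    | [] => c.length + 1
    | x :: _ => newRow x rest

lemma newRow_nil (w : ℕ) : newRow w [] = 1 := rfl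

lemma newRow_cons_app (w : ℕ) (c : List ℕ) (rest : List (List ℕ))
    (h : c.dropWhile (pLt w) = []) : newRow w (c :: rest) = c.length + 1 := by
  simp only [newRow, pLt] at h ⊢; rw [h]

lemma newRow_cons_bump (w : ℕ) (c : List ℕ) (rest : List (List ℕ)) {x : ℕ} {c₂ : List ℕ}
    (h : c.dropWhile (pLt w) = x :: c₂) : newRow w (c :: rest) = newRow x rest := by
  simp only [newRow, pLt] at h ⊢; rw [h]

lemma newRow_pos (w : ℕ) (T : List (List ℕ)) : 1 ≤ newRow w T := by
  induction T generalizing w with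
  | nil => simp [newRow]
  | cons c rest ih =>
    rcases hdw : c.dropWhile (pLt w) with _ | ⟨x, c₂⟩
    · rw [newRow_cons_app w c rest hdw]; omega
    · rw [newRow_cons_bump w c rest hdw]; exact ih x

lemma rowLen_cons (c : List ℕ) (T : List (List ℕ)) (i : ℕ) :
    rowLen (c :: T) i = rowLen T i + if i ≤ c.length then 1 else 0 := by
  simp [rowLen, List.countP_cons]

lemma qIdx_eq_len_of_dw_nil {w : ℕ} {c : List ℕ} (h : c.dropWhile (pLt w) = []) :
    qIdx w c = c.length := by
  have := takeWhile_append_dropWhile (p := pLt w) (l := c)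
  rw [h, List.append_nil] at this
  rw [qIdx, this]

lemma rowLen_colInsert (w : ℕ) (T : List (List ℕ)) (i : ℕ) (hi : 1 ≤ i) :
    rowLen (colInsert w T) i = rowLen T i + if i = newRow w T then 1 else 0 := by
  induction T generalizing w with
  | nil =>
    simp only [colInsert_nil, newRow_nil, rowLen, List.countP_cons, List.countP_nil]
    simp only [List.length_cons, List.length_nil]
    split_ifs <;> simp_all <;> omega
  | cons c rest ih =>
    rcases hdw : c.dropWhile (pLt w) with _ | ⟨x, c₂⟩
    · rw [colInsert_cons_app w c rest hdw, newRow_cons_app w c rest hdw,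
        rowLen_cons, rowLen_cons]
      simp only [List.length_append, List.length_cons, List.length_nil]
      split_ifs <;> omega
    · rw [colInsert_cons_bump w c rest hdw, newRow_cons_bump w c rest hdw,
        rowLen_cons, rowLen_cons, ih x]
      simp only [List.length_set]
      split_ifs <;> omega

lemma newRow_le_q {S : List (List ℕ)}
    (hch : S.Chain' colRel) (w : ℕ) :
    newRow w S ≤ qIdx w (S.headD []) + 1 := by
  induction S generalizing w with
  | nil => simp [newRow]
  | cons c rest ih =>
    rcases hdw : c.dropWhile (pLt w) with _ | ⟨x, c₂⟩
    · simp only [List.headD_cons]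
      rw [newRow_cons_app w c rest hdw, qIdx_eq_len_of_dw_nil hdw]
    · rw [newRow_cons_bump w c rest hdw]
      obtain ⟨hx, -, hqlt⟩ := dw_cons_eq w c hdw
      have hrest : rest.Chain' colRel := hch.tail
      have := ih hrest (w := x)
      refine le_trans this ?_
      simp only [List.headD_cons, add_le_add_iff_right]
      -- qIdx x (rest.headD []) ≤ qIdx w c
      rcases rest with _ | ⟨d, rest'⟩
      · simp [qIdx]
      · simp only [List.headD_cons]
        by_contra hgt
        push_neg at hgt
        have hrel : colRel c d := (List.isChain_cons_cons.mp hch).1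
        have hqd : qIdx w c < (d.takeWhile (pLt x)).length := hgt
        have hdlen : qIdx w c < d.length := lt_of_lt_of_le hqd (qIdx_le x d)
        have h1 : d.getD (qIdx w c) 0 < x := getD_lt_of_lt_qIdx x d hqd
        have h2 : c.getD (qIdx w c) 0 ≤ d.getD (qIdx w c) 0 := hrel.2 _ hdlen
        omega

lemma getD_set' {c : List ℕ} {q w i : ℕ} (hi : i < c.length) :
    (c.set q w).getD i 0 = if q = i then w else c.getD i 0 := by
  have hi' : i < (c.set q w).length := by rwa [List.length_set]
  rw [List.getD_eq_getElem _ _ hi', List.getElem_set]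
  split_ifs with h
  · rfl
  · rw [List.getD_eq_getElem _ _ hi]

lemma le_qIdx_of {w k : ℕ} {l : List ℕ} (hk : k ≤ l.length)
    (h : ∀ i < k, l.getD i 0 < w) : k ≤ qIdx w l := by
  by_contra hlt
  push_neg at hlt
  have h1 : qIdx w l < l.length := lt_of_lt_of_le hlt hk
  have := not_lt_getD_qIdx w l h1
  have := h _ hlt
  omega

lemma newRow_lt_insert {S : List (List ℕ)}
    (hcols : ∀ c ∈ S, c.Chain' (· < ·)) (hch : S.Chain' colRel)
    {w w' : ℕ} (hww : w < w') :
    newRow w S < newRow w' (colInsert w S) := by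
  induction S generalizing w w' with
  | nil =>
    rw [colInsert_nil, newRow_nil]
    have hdw : [w].dropWhile (pLt w') = [] := by simp [pLt, hww]
    rw [newRow_cons_app w' [w] [] hdw]; simp
  | cons c rest ih =>
    rcases hdw : c.dropWhile (pLt w) with _ | ⟨x, c₂⟩
    · rw [colInsert_cons_app w c rest hdw, newRow_cons_app w c rest hdw]
      have hall : ∀ y ∈ c, y < w := by
        intro y hy
        have := List.dropWhile_eq_nil_iff.mp hdw y hy
        simpa [pLt] using this
      have hdw' : (c ++ [w]).dropWhile (pLt w') = [] := by
        rw [List.dropWhile_eq_nil_iff]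
        intro y hy
        simp only [List.mem_append, List.mem_singleton] at hy
        rcases hy with hy | rfl
        · simp [pLt]; exact lt_trans (hall y hy) hww
        · simp [pLt, hww]
      rw [newRow_cons_app w' _ rest hdw']
      simp
    · rw [colInsert_cons_bump w c rest hdw, newRow_cons_bump w c rest hdw]
      obtain ⟨hx, -, hqlt⟩ := dw_cons_eq w c hdw
      set q := qIdx w c with hq
      have hcstr : c.Chain' (· < ·) := hcols c (by simp)
      have hle : newRow x rest ≤ q + 1 := by
        have := newRow_le_q hch w
        rwa [newRow_cons_bump w c rest hdw, List.headD_cons] at this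
      set l := c.set q w with hl
      have hlen : l.length = c.length := List.length_set ..
      have hq1 : q + 1 ≤ qIdx w' l := by
        apply le_qIdx_of (by omega)
        intro i hi
        rw [getD_set' (by omega)]
        split_ifs with hqi
        · exact hww
        · have hiq : i < q := by omega
          have := getD_lt_of_lt_qIdx w c hiq
          omega
      rcases hdw' : l.dropWhile (pLt w') with _ | ⟨x', c₂'⟩
      · rw [newRow_cons_app w' l _ hdw']
        omega
      · rw [newRow_cons_bump w' l _ hdw']
        obtain ⟨hx', -, hqlt'⟩ := dw_cons_eq w' l hdw'
        have hq'q : q < qIdx w' l := by omega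
        have hx'c : x' = c.getD (qIdx w' l) 0 := by
          rw [hx', getD_set' (by omega)]
          split_ifs with h
          · omega
          · rfl
        have hxx' : x < x' := by
          rw [hx, hx'c]
          exact chainLt_getD_lt hcstr hq'q (by omega)
        exact ih (fun e he => hcols e (by simp [he])) hch.tail hxx'

lemma getD_append_left {l l' : List ℕ} {r : ℕ} (h : r < l.length) :
    (l ++ l').getD r 0 = l.getD r 0 := List.getD_append _ _ _ _ h

lemma getD_append_self {l : List ℕ} {w : ℕ} :
    (l ++ [w]).getD l.length 0 = w := by
  have h : l.length < (l ++ [w]).length := by simp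
  rw [List.getD_eq_getElem _ _ h, List.getElem_append_right (le_refl _)]
  simp

lemma getD_mem {l : List ℕ} {r : ℕ} (h : r < l.length) : l.getD r 0 ∈ l := by
  rw [List.getD_eq_getElem _ _ h]; exact List.getElem_mem h

lemma all_lt_of_dw_nil {w : ℕ} {c : List ℕ} (h : c.dropWhile (pLt w) = []) :
    ∀ y ∈ c, y < w := by
  intro y hy
  have := List.dropWhile_eq_nil_iff.mp h y hy
  simpa [pLt] using this

lemma set_mem {c : List ℕ} {q w : ℕ} {y : ℕ} (hy : y ∈ c.set q w) :
    y = w ∨ y ∈ c := by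
  rw [List.mem_iff_getElem] at hy
  obtain ⟨i, hi, hyi⟩ := hy
  rw [List.getElem_set] at hyi
  rw [List.length_set] at hi
  split_ifs at hyi with h
  · exact Or.inl hyi.symm
  · exact Or.inr (hyi ▸ List.getElem_mem hi)

lemma chain'_lt_of_getD {l : List ℕ}
    (h : ∀ i j, i < j → j < l.length → l.getD i 0 < l.getD j 0) : l.Chain' (· < ·) := by
  unfold List.Chain'; rw [List.isChain_iff_getElem]
  intro i hi
  have h2 := h i (i + 1) (by omega) (by omega)
  rwa [List.getD_eq_getElem _ _ (by omega), List.getD_eq_getElem _ _ (by omega)] at h2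

lemma set_strict {c : List ℕ} (hc : c.Chain' (· < ·)) {q w : ℕ} (hq : q < c.length)
    (hlow : ∀ i < q, c.getD i 0 < w) (hup : w ≤ c.getD q 0) :
    (c.set q w).Chain' (· < ·) := by
  apply chain'_lt_of_getD
  intro i j hij hj
  rw [List.length_set] at hj
  have hi : i < c.length := by omega
  rw [getD_set' hi, getD_set' hj]
  have hcij : c.getD i 0 < c.getD j 0 := chainLt_getD_lt hc hij hj
  split_ifs with h1 h2 h2
  · omega
  · -- q = i : w < c.getD j
    subst h1
    have h3 : c.getD q 0 < c.getD j 0 := chainLt_getD_lt hc hij hj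
    omega
  · -- q = j : c.getD i < w
    subst h2
    have h3 := hlow i hij
    omega
  · exact hcij

lemma colInsert_ne_nil (w : ℕ) (S : List (List ℕ)) : colInsert w S ≠ [] := by
  rcases S with _ | ⟨c, rest⟩
  · simp [colInsert_nil]
  · rcases hdw : c.dropWhile (pLt w) with _ | ⟨x, c₂⟩
    · rw [colInsert_cons_app w c rest hdw]; simp
    · rw [colInsert_cons_bump w c rest hdw]; simp

/-- The main insertion invariant lemma. -/
lemma MIL {m : ℕ} {c : List ℕ} (hc : c.Chain' (· < ·)) :
    ∀ S : List (List ℕ),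
    (∀ e ∈ S, e ≠ []) → (∀ e ∈ S, e.Chain' (· < ·)) →
    (∀ e ∈ S, ∀ x ∈ e, 1 ≤ x ∧ x ≤ m) → S.Chain' colRel →
    (∀ e ∈ S, e.length ≤ c.length ∧ ∀ r < e.length, c.getD r 0 ≤ e.getD r 0) →
    ∀ w : ℕ, 1 ≤ w → w ≤ m →
    qIdx w (S.headD []) < c.length → c.getD (qIdx w (S.headD [])) 0 ≤ w →
    (∀ e ∈ colInsert w S, e ≠ []) ∧ (∀ e ∈ colInsert w S, e.Chain' (· < ·)) ∧
    (∀ e ∈ colInsert w S, ∀ x ∈ e, 1 ≤ x ∧ x ≤ m) ∧ (colInsert w S).Chain' colRel ∧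
    (∀ e ∈ colInsert w S, e.length ≤ c.length ∧ ∀ r < e.length, c.getD r 0 ≤ e.getD r 0) := by
  intro S
  induction S with
  | nil =>
    intro _ _ _ _ _ w hw1 hwm hqc hcq
    simp only [List.headD_nil, qIdx, List.takeWhile_nil, List.length_nil] at hqc hcq
    rw [colInsert_nil]
    refine ⟨by simp, by simp; exact List.isChain_singleton _, by simp [hw1, hwm], List.isChain_singleton _, ?_⟩
    intro e he
    simp only [List.mem_singleton] at he
    subst he
    exact ⟨by simp; omega, by intro r hr; simp at hr; subst hr; simpa using hcq⟩
  | cons e rest ih =>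
    intro hne hstr hbdd hch hdom w hw1 hwm hqc hcq
    simp only [List.headD_cons] at hqc hcq
    have hene : e ≠ [] := hne e (by simp)
    have hestr : e.Chain' (· < ·) := hstr e (by simp)
    have hedom := hdom e (by simp)
    rcases hdw : e.dropWhile (pLt w) with _ | ⟨x, c₂⟩
    · -- append at bottom of first column
      have hqe : qIdx w e = e.length := qIdx_eq_len_of_dw_nil hdw
      rw [hqe] at hqc hcq
      rw [colInsert_cons_app w e rest hdw]
      have hall : ∀ y ∈ e, y < w := all_lt_of_dw_nil hdw
      refine ⟨?_, ?_, ?_, ?_, ?_⟩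
      · intro f hf
        rcases List.mem_cons.mp hf with rfl | hf
        · simp
        · exact hne f (by simp [hf])
      · intro f hf
        rcases List.mem_cons.mp hf with rfl | hf
        · unfold List.Chain'; rw [List.isChain_iff_pairwise, List.pairwise_append]
          refine ⟨List.isChain_iff_pairwise.mp hestr, by simp, ?_⟩
          intro a ha b hb
          simp only [List.mem_singleton] at hb
          subst hb
          exact hall a ha
        · exact hstr f (by simp [hf])
      · intro f hf
        rcases List.mem_cons.mp hf with rfl | hf
        · intro y hy
          rcases List.mem_append.mp hy with hy | hy
          · exact hbdd e (by simp) y hy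
          · simp only [List.mem_singleton] at hy; subst hy; exact ⟨hw1, hwm⟩
        · exact hbdd f (by simp [hf])
      · unfold List.Chain'; rw [List.isChain_cons]
        refine ⟨?_, hch.tail⟩
        intro f hf
        rcases rest with _ | ⟨d', rest'⟩
        · simp at hf
        · simp only [List.head?_cons, Option.mem_some_iff] at hf
          subst hf
          have hrel : colRel e d' := (List.isChain_cons_cons.mp hch).1
          have hlen1 : d'.length ≤ e.length := hrel.1
          refine ⟨by simp; omega, ?_⟩
          intro r hr
          rw [getD_append_left (lt_of_lt_of_le hr hlen1)]
          exact hrel.2 r hr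
      · intro f hf
        rcases List.mem_cons.mp hf with rfl | hf
        · refine ⟨by simp; omega, ?_⟩
          intro r hr
          simp only [List.length_append, List.length_cons, List.length_nil] at hr
          rcases Nat.lt_or_ge r e.length with h | h
          · rw [getD_append_left h]
            exact hedom.2 r h
          · have : r = e.length := by omega
            subst this
            rw [getD_append_self]
            exact hcq
        · exact hdom f (by simp [hf])
    · -- bump case
      obtain ⟨hx, hc₂, hqlt⟩ := dw_cons_eq w e hdw
      set q := qIdx w e with hqdef
      have hwx : w ≤ x := by rw [hx]; exact not_lt_getD_qIdx w e hqlt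
      have hxm : 1 ≤ x ∧ x ≤ m := hbdd e (by simp) x (hx ▸ getD_mem hqlt)
      rw [colInsert_cons_bump w e rest hdw]
      -- the landing index in the next column is ≤ q
      have hq' : qIdx x (rest.headD []) ≤ q := by
        rcases rest with _ | ⟨d, rest'⟩
        · simp [qIdx]
        · simp only [List.headD_cons]
          by_contra hgt
          push_neg at hgt
          have hrel : colRel e d := (List.isChain_cons_cons.mp hch).1
          have hdlen : q < d.length := lt_of_lt_of_le hgt (qIdx_le x d)
          have h1 : d.getD q 0 < x := getD_lt_of_lt_qIdx x d hgt
          have h2 : e.getD q 0 ≤ d.getD q 0 := hrel.2 _ hdlen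
          omega
      have hq'c : qIdx x (rest.headD []) < c.length := lt_of_le_of_lt hq' hqc
      have hcq' : c.getD (qIdx x (rest.headD [])) 0 ≤ x :=
        le_trans (le_trans (chainLt_getD_le hc hq' hqc) hcq) hwx
      obtain ⟨ihne, ihstr, ihbdd, ihch, ihdom⟩ :=
        ih (fun f hf => hne f (by simp [hf])) (fun f hf => hstr f (by simp [hf]))
          (fun f hf => hbdd f (by simp [hf])) hch.tail
          (fun f hf => hdom f (by simp [hf])) x hxm.1 hxm.2 hq'c hcq'
      have hlow : ∀ i < q, e.getD i 0 < w := fun i hi => getD_lt_of_lt_qIdx w e hi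
      have hsetlen : (e.set q w).length = e.length := List.length_set ..
      have hsetget : ∀ i < e.length, (e.set q w).getD i 0 = if q = i then w else e.getD i 0 :=
        fun i hi => getD_set' hi
      refine ⟨?_, ?_, ?_, ?_, ?_⟩
      · intro f hf
        rcases List.mem_cons.mp hf with rfl | hf
        · intro h
          rw [← List.length_eq_zero_iff] at h
          rw [hsetlen] at h
          exact hene (List.length_eq_zero_iff.mp h)
        · exact ihne f hf
      · intro f hf
        rcases List.mem_cons.mp hf with rfl | hf
        · exact set_strict hestr hqlt hlow (hx ▸ hwx)
        · exact ihstr f hf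
      · intro f hf
        rcases List.mem_cons.mp hf with rfl | hf
        · intro y hy
          rcases set_mem hy with rfl | hy
          · exact ⟨hw1, hwm⟩
          · exact hbdd e (by simp) y hy
        · exact ihbdd f hf
      · unfold List.Chain'; rw [List.isChain_cons]
        refine ⟨?_, ihch⟩
        intro f hf
        -- f is the head of colInsert x rest
        rcases rest with _ | ⟨d, rest'⟩
        · rw [colInsert_nil] at hf
          simp only [List.head?_cons, Option.mem_some_iff] at hf
          subst hf
          constructor
          · rw [hsetlen]; simpa [Nat.one_le_iff_ne_zero, List.length_eq_zero_iff] using hene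
          · intro r hr
            simp only [List.length_cons, List.length_nil] at hr
            have hr0 : r = 0 := by omega
            subst hr0
            have h0 : 0 < e.length := List.length_pos_iff.mpr hene
            rw [hsetget 0 h0]
            split_ifs with hq0
            · simpa using hwx
            · have : e.getD 0 0 ≤ e.getD q 0 := chainLt_getD_le hestr (by omega) hqlt
              simp only [List.getD_cons_zero]
              omega
        · have hrel : colRel e d := (List.isChain_cons_cons.mp hch).1
          have hq'd : qIdx x d ≤ q := by simpa using hq'
          rcases hdwd : d.dropWhile (pLt x) with _ | ⟨x', d₂⟩
          · -- x appended to bottom of d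
            rw [colInsert_cons_app x d rest' hdwd] at hf
            simp only [List.head?_cons, Option.mem_some_iff] at hf
            subst hf
            have hdq : qIdx x d = d.length := qIdx_eq_len_of_dw_nil hdwd
            have hdle : d.length ≤ q := by rw [← hdq]; exact hq'd
            have heq : q < e.length := hqlt
            have hdlee : d.length ≤ e.length := hrel.1
            constructor
            · simp only [List.length_append, List.length_cons, List.length_nil, hsetlen, List.length_set]
              omega
            · intro r hr
              simp only [List.length_append, List.length_cons, List.length_nil] at hr
              rcases Nat.lt_or_ge r d.length with h | h
              · rw [getD_append_left h]
                have hrq : r < q := by omega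
                rw [hsetget r (by omega)]
                have hrd := hrel.2 r h
                split_ifs with hqr
                · omega
                · exact hrd
              · have hrd : r = d.length := by omega
                rw [hrd, getD_append_self, hsetget d.length (by omega)]
                have hxq : x = e.getD q 0 := hx
                split_ifs with hqr
                · exact hwx
                · have hle2 : e.getD d.length 0 ≤ e.getD q 0 :=
                    chainLt_getD_le hestr (by omega) hqlt
                  omega
          · -- bump into d
            rw [colInsert_cons_bump x d rest' hdwd] at hf
            simp only [List.head?_cons, Option.mem_some_iff] at hf
            subst hf
            obtain ⟨hx', hd₂, hqlt'⟩ := dw_cons_eq x d hdwd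
            set q' := qIdx x d with hq'def
            have hdlee : d.length ≤ e.length := hrel.1
            constructor
            · rw [List.length_set, hsetlen]; exact hdlee
            · intro r hr
              rw [List.length_set] at hr
              rw [getD_set' hr, hsetget r (by omega)]
              have hq'q : q' ≤ q := hq'd
              have hxq : x = e.getD q 0 := hx
              have hrd := hrel.2 r hr
              -- goal: (if q = r then w else e.getD r 0) ≤ (if q' = r then x else d.getD r 0)
              split_ifs with h1 h2 h2
              · exact hwx
              · -- q = r, q' ≠ r: w ≤ d.getD r
                have hlink : e.getD q 0 = e.getD r 0 := by rw [h1]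
                omega
              · -- q ≠ r, q' = r: e.getD r ≤ x, with r = q' ≤ q, r ≠ q so r < q
                have hle2 : e.getD r 0 ≤ e.getD q 0 :=
                  chainLt_getD_le hestr (show r ≤ q by omega) hqlt
                omega
              · exact hrd
      · intro f hf
        rcases List.mem_cons.mp hf with rfl | hf
        · refine ⟨by rw [hsetlen]; exact hedom.1, ?_⟩
          intro r hr
          rw [hsetlen] at hr
          rw [hsetget r hr]
          split_ifs with hqr
          · exact hqr ▸ hcq
          · exact hedom.2 r hr
        · exact ihdom f hf


lemma insertCol_nil' (T : List (List ℕ)) : insertCol [] T = T := rfl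

lemma insertCol_cons (a : ℕ) (l : List ℕ) (T : List (List ℕ)) :
    insertCol (a :: l) T = insertCol l (colInsert a T) := rfl

lemma HQ {c : List ℕ} (hc : c.Chain' (· < ·)) {S : List (List ℕ)}
    (hdom : ∀ e ∈ S, e.length ≤ c.length ∧ ∀ r < e.length, c.getD r 0 ≤ e.getD r 0)
    {w : ℕ} (hw : w ∈ c) :
    qIdx w (S.headD []) < c.length ∧ c.getD (qIdx w (S.headD [])) 0 ≤ w := by
  obtain ⟨i, hi, hwi⟩ := List.mem_iff_getElem.mp hw
  have hwi' : c.getD i 0 = w := by rw [List.getD_eq_getElem _ _ hi, hwi]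
  rcases S with _ | ⟨e, rest⟩
  · simp only [List.headD_nil, qIdx, List.takeWhile_nil, List.length_nil]
    exact ⟨by omega, le_trans (chainLt_getD_le hc (by omega) hi) (le_of_eq hwi')⟩
  · simp only [List.headD_cons]
    have hedom := hdom e (by simp)
    have hqi : qIdx w e ≤ i := by
      by_contra hgt
      push_neg at hgt
      have hie : i < e.length := lt_of_lt_of_le hgt (qIdx_le w e)
      have h1 : e.getD i 0 < w := getD_lt_of_lt_qIdx w e hgt
      have h2 : c.getD i 0 ≤ e.getD i 0 := hedom.2 i hie
      omega
    exact ⟨by omega, le_trans (chainLt_getD_le hc hqi hi) (le_of_eq hwi')⟩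

lemma drive {m : ℕ} {c : List ℕ} (hc : c.Chain' (· < ·)) :
    ∀ (b : List ℕ) (S : List (List ℕ)) (ρ : ℕ),
    b.Chain' (· < ·) → (∀ w ∈ b, w ∈ c) → (∀ w ∈ b, 1 ≤ w ∧ w ≤ m) →
    (∀ e ∈ S, e ≠ []) → (∀ e ∈ S, e.Chain' (· < ·)) →
    (∀ e ∈ S, ∀ x ∈ e, 1 ≤ x ∧ x ≤ m) → S.Chain' colRel →
    (∀ e ∈ S, e.length ≤ c.length ∧ ∀ r < e.length, c.getD r 0 ≤ e.getD r 0) →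
    (∀ h : b ≠ [], ρ < newRow (b.head h) S) →
    (∀ i, 1 ≤ i → i ≤ ρ → rowLen (insertCol b S) i = rowLen S i) ∧
    (∀ i, 1 ≤ i → rowLen (insertCol b S) i ≤ rowLen S i + 1) ∧
    (∀ i, 1 ≤ i → rowLen S i ≤ rowLen (insertCol b S) i) ∧
    (∀ i, c.length < i → rowLen (insertCol b S) i = rowLen S i) ∧
    ((Finset.Icc 1 c.length).sum (fun i => rowLen (insertCol b S) i) =
      (Finset.Icc 1 c.length).sum (fun i => rowLen S i) + b.length) := by
  intro b
  induction b with
  | nil =>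
    intro S ρ _ _ _ _ _ _ _ _ _
    rw [insertCol_nil']
    exact ⟨fun _ _ _ => rfl, fun i _ => by omega, fun i _ => le_refl _,
      fun _ _ => rfl, by simp⟩
  | cons w bt ih =>
    intro S ρ hbch hbc hbm hne hstr hbdd hch hdom hρ
    rw [insertCol_cons]
    have hwc : w ∈ c := hbc w (by simp)
    have hwm : 1 ≤ w ∧ w ≤ m := hbm w (by simp)
    obtain ⟨hq1, hq2⟩ := HQ hc hdom hwc
    obtain ⟨ihne, ihstr, ihbdd, ihch, ihdom⟩ :=
      MIL hc S hne hstr hbdd hch hdom w hwm.1 hwm.2 hq1 hq2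
    set S' := colInsert w S with hS'
    set r := newRow w S with hr
    have hr1 : 1 ≤ r := newRow_pos w S
    have hrc : r ≤ c.length := by
      have := newRow_le_q hch w
      omega
    have hA : ∀ i, 1 ≤ i → rowLen S' i = rowLen S i + if i = r then 1 else 0 :=
      fun i hi => rowLen_colInsert w S i hi
    have hstep : ∀ h : bt ≠ [], r < newRow (bt.head h) S' := by
      intro h
      have hlt : w < bt.head h := by
        have := (List.isChain_cons.mp hbch).1 (bt.head h) (by simp [List.head?_eq_head h])
        exact this
      exact newRow_lt_insert hstr hch hlt
    obtain ⟨ih1, ih2, ih3, ih4, ih5⟩ :=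
      ih S' r (hbch.tail) (fun v hv => hbc v (by simp [hv])) (fun v hv => hbm v (by simp [hv]))
        ihne ihstr ihbdd ihch ihdom hstep
    refine ⟨?_, ?_, ?_, ?_, ?_⟩
    · intro i hi1 hiρ
      have hir : i < r := lt_of_le_of_lt hiρ (hρ (by simp))
      rw [ih1 i hi1 (by omega), hA i hi1]
      simp [show i ≠ r by omega]
    · intro i hi1
      rcases le_or_gt i r with h | h
      · rw [ih1 i hi1 h, hA i hi1]
        split_ifs <;> omega
      · have := ih2 i hi1
        rw [hA i hi1] at this
        simp only [show i ≠ r by omega, if_false] at this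
        omega
    · intro i hi1
      have h1 := ih3 i hi1
      rw [hA i hi1] at h1
      split_ifs at h1 <;> omega
    · intro i hic
      rw [ih4 i hic, hA i (by omega)]
      simp [show i ≠ r by omega]
    · rw [ih5]
      have hsum : (Finset.Icc 1 c.length).sum (fun i => rowLen S' i) =
          (Finset.Icc 1 c.length).sum (fun i => rowLen S i) + 1 := by
        have h1 : (Finset.Icc 1 c.length).sum (fun i => rowLen S' i) =
            (Finset.Icc 1 c.length).sum
              (fun i => rowLen S i + if i = r then 1 else 0) := by
          apply Finset.sum_congr rfl
          intro i hi
          rw [Finset.mem_Icc] at hi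
          exact hA i hi.1
        rw [h1, Finset.sum_add_distrib, Finset.sum_ite_eq' (Finset.Icc 1 c.length) r
          (fun _ => 1)]
        rw [if_pos (Finset.mem_Icc.mpr ⟨hr1, hrc⟩)]
      rw [hsum]
      simp only [List.length_cons]
      omega

lemma colInsert_cons_bump' (w : ℕ) (c : List ℕ) (rest : List (List ℕ)) {x : ℕ} {c₂ : List ℕ}
    (h : c.dropWhile (pLt w) = x :: c₂) :
    colInsert w (c :: rest) = (c.takeWhile (pLt w) ++ w :: c₂) :: colInsert x rest := by
  simp only [colInsert, pLt] at h ⊢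
  rw [h]

lemma fold_aux : ∀ (s pfx t : List ℕ) (U : List (List ℕ)),
    (pfx ++ s).Chain' (· < ·) → (pfx ++ t).Chain' (· < ·) →
    t.length ≤ s.length → (∀ r < t.length, s.getD r 0 ≤ t.getD r 0) →
    insertCol s ((pfx ++ t) :: U) = (pfx ++ s) :: insertCol t U := by
  intro s
  induction s with
  | nil =>
    intro pfx t U _ _ hlen _
    have ht : t = [] := List.length_eq_zero_iff.mp (by simpa using hlen)
    subst ht
    rw [insertCol_nil', insertCol_nil']
  | cons s₀ st ih =>
    intro pfx t U hch1 hch2 hlen hrow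
    have hpair1 := List.isChain_iff_pairwise.mp hch1
    rw [List.pairwise_append] at hpair1
    have hps₀ : ∀ y ∈ pfx, y < s₀ := fun y hy => hpair1.2.2 y hy s₀ (by simp)
    have hdwp : pfx.dropWhile (pLt s₀) = [] := by
      rw [List.dropWhile_eq_nil_iff]
      intro y hy
      simp only [pLt, decide_eq_true_eq]
      exact hps₀ y hy
    have htwp : pfx.takeWhile (pLt s₀) = pfx := by
      have := List.takeWhile_append_dropWhile (p := pLt s₀) (l := pfx)
      rw [hdwp, List.append_nil] at this
      exact this
    rcases t with _ | ⟨t₀, tt⟩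
    · -- t = []
      have hdw : (pfx ++ ([] : List ℕ)).dropWhile (pLt s₀) = [] := by
        rw [List.append_nil]; exact hdwp
      rw [insertCol_cons, colInsert_cons_app s₀ _ U hdw]
      have hstep : (pfx ++ ([] : List ℕ)) ++ [s₀] = (pfx ++ [s₀]) ++ ([] : List ℕ) := by simp
      rw [hstep]
      have hch1' : ((pfx ++ [s₀]) ++ st).Chain' (· < ·) := by
        have h : (pfx ++ [s₀]) ++ st = pfx ++ (s₀ :: st) := by simp
        rw [h]; exact hch1
      have hch2' : ((pfx ++ [s₀]) ++ ([] : List ℕ)).Chain' (· < ·) := by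
        rw [List.append_nil]
        apply List.IsChain.sublist hch1
        apply List.Sublist.append_left
        exact List.cons_sublist_cons.mpr (List.nil_sublist st)
      have hres := ih (pfx ++ [s₀]) [] U hch1' hch2' (by simp) (by intro r hr; simp at hr)
      rw [hres]
      have h : (pfx ++ [s₀]) ++ st = pfx ++ (s₀ :: st) := by simp
      rw [h]
    · -- t = t₀ :: tt
      have hst0 : s₀ ≤ t₀ := by
        have := hrow 0 (by simp)
        simpa using this
      have hdw : (pfx ++ t₀ :: tt).dropWhile (pLt s₀) = t₀ :: tt := by
        rw [List.dropWhile_append, hdwp]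
        simp only [List.isEmpty_nil, if_true]
        rw [List.dropWhile_cons]
        simp only [pLt, decide_eq_true_eq]
        rw [if_neg (by omega)]
      have htw : (pfx ++ t₀ :: tt).takeWhile (pLt s₀) = pfx := by
        rw [List.takeWhile_append, htwp, if_pos rfl]
        rw [List.takeWhile_cons]
        simp only [pLt, decide_eq_true_eq]
        rw [if_neg (by omega)]
        simp
      rw [insertCol_cons, colInsert_cons_bump' s₀ _ U hdw, htw]
      have hpair2 := List.isChain_iff_pairwise.mp hch2
      rw [List.pairwise_append] at hpair2
      have hshift : pfx ++ s₀ :: tt = (pfx ++ [s₀]) ++ tt := by simp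
      rw [hshift]
      have hch1' : ((pfx ++ [s₀]) ++ st).Chain' (· < ·) := by
        have h : (pfx ++ [s₀]) ++ st = pfx ++ (s₀ :: st) := by simp
        rw [h]; exact hch1
      have hch2' : ((pfx ++ [s₀]) ++ tt).Chain' (· < ·) := by
        unfold List.Chain'; rw [List.isChain_iff_pairwise, List.pairwise_append]
        refine ⟨?_, ?_, ?_⟩
        · exact List.isChain_iff_pairwise.mp (by
            apply List.IsChain.sublist hch1
            apply List.Sublist.append_left
            exact List.cons_sublist_cons.mpr (List.nil_sublist st))
        · have h2 : (t₀ :: tt).Pairwise (· < ·) := hpair2.2.1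
          exact (List.pairwise_cons.mp h2).2
        · intro a ha b hb
          simp only [List.mem_append, List.mem_singleton] at ha
          have ht0b : t₀ < b := by
            have h2 : (t₀ :: tt).Pairwise (· < ·) := hpair2.2.1
            exact (List.pairwise_cons.mp h2).1 b hb
          rcases ha with ha | rfl
          · exact lt_trans (hps₀ a ha) (by omega)
          · omega
      have hlen' : tt.length ≤ st.length := by
        simp only [List.length_cons] at hlen
        omega
      have hrow' : ∀ r < tt.length, st.getD r 0 ≤ tt.getD r 0 := by
        intro r hr
        have := hrow (r + 1) (by simp only [List.length_cons]; omega)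
        simpa using this
      rw [ih (pfx ++ [s₀]) tt (colInsert t₀ U) hch1' hch2' hlen' hrow']
      have h : (pfx ++ [s₀]) ++ st = pfx ++ (s₀ :: st) := by simp
      rw [h, insertCol_cons]

lemma sub_tableau {m : ℕ} {c : List ℕ} {rest : List (List ℕ)}
    (h : IsTableau m (c :: rest)) : IsTableau m rest := by
  obtain ⟨h1, h2, h3, h4⟩ := h
  exact ⟨fun e he => h1 e (by simp [he]), fun e he => h2 e (by simp [he]),
    fun e he => h3 e (by simp [he]), h4.tail⟩

lemma reconstruct {m : ℕ} : ∀ (T : List (List ℕ)), IsTableau m T →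
    ∀ (h : T ≠ []), insertCol (T.head h) T.tail = T := by
  intro T
  induction T with
  | nil => intro _ h; exact absurd rfl h
  | cons c U ih =>
    intro hT h
    simp only [List.head_cons, List.tail_cons]
    obtain ⟨hne, hstr, hbdd, hch⟩ := hT
    have hcne : c ≠ [] := hne c (by simp)
    have hcstr : c.Chain' (· < ·) := hstr c (by simp)
    rcases U with _ | ⟨e, U'⟩
    · rcases c with _ | ⟨c₀, ct⟩
      · exact absurd rfl hcne
      · rw [insertCol_cons, colInsert_nil]
        have h1 : ([[c₀]] : List (List ℕ)) = (([c₀] ++ ([] : List ℕ)) :: ([] : List (List ℕ))) := by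
          simp
        rw [h1]
        have hch1 : ([c₀] ++ ct).Chain' (· < ·) := by simpa using hcstr
        rw [fold_aux ct [c₀] [] [] hch1 (List.isChain_singleton _) (by simp) (by intro r hr; simp at hr)]
        simp [insertCol_nil']
    · have hrel : colRel c e := (List.isChain_cons_cons.mp hch).1
      have hestr : e.Chain' (· < ·) := hstr e (by simp)
      have h1 : (e :: U' : List (List ℕ)) = ((([] : List ℕ) ++ e) :: U') := by simp
      rw [h1, fold_aux c [] e U' (by simpa using hcstr) (by simpa using hestr)
        hrel.1 hrel.2]
      simp only [List.nil_append]
      have hrec := ih (sub_tableau ⟨hne, hstr, hbdd, hch⟩) (by simp)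
      simp only [List.head_cons, List.tail_cons] at hrec
      rw [hrec]

end S17

theorem stmt17 (n : ℕ) (hn : 1 ≤ n) (lam : List ℕ)
    (hlam : IsPartition lam) (hlen : lam.length ≤ 2 * n)
    (T : List (List ℕ)) (hT : IsTableau (2 * n) T) (hsh : hasShape T lam) :
    ((∀ i, 1 ≤ i → rowLen (suc T) i ≤ part lam i) ∧
      (∀ i, 1 ≤ i → part lam i ≤ rowLen (suc T) i + 1)) ∧
    ((∀ i, 1 ≤ i → rowLen (suc T) i = part lam i) ↔ suc T = T) := by
  rcases T with _ | ⟨c, rest⟩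
  · -- empty tableau
    have hsuc : suc ([] : List (List ℕ)) = [] := rfl
    rw [hsuc]
    refine ⟨⟨fun i hi => ?_, fun i hi => ?_⟩, ?_⟩
    · rw [← hsh i hi]
    · rw [← hsh i hi]; omega
    · constructor
      · intro _; rfl
      · intro _ i hi; exact hsh i hi
  · -- T = c :: rest
    obtain ⟨hne, hstr, hbdd, hch⟩ := hT
    have hcne : c ≠ [] := hne c (by simp)
    have hcstr : c.Chain' (· < ·) := hstr c (by simp)
    have hch' : (c :: rest).Chain' S17.colRel := hch
    have hsuc : suc (c :: rest) = insertCol (redSeq c) rest := rfl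
    set b := redSeq c with hb
    have hbsub : b.Sublist c := List.filter_sublist
    have hbch : b.Chain' (· < ·) := List.IsChain.sublist hcstr hbsub
    have hbmem : ∀ w ∈ b, w ∈ c := fun w hw => hbsub.subset hw
    have hbbdd : ∀ w ∈ b, 1 ≤ w ∧ w ≤ 2 * n :=
      fun w hw => hbdd c (by simp) w (hbmem w hw)
    have hrne : ∀ e ∈ rest, e ≠ [] := fun e he => hne e (by simp [he])
    have hrstr : ∀ e ∈ rest, e.Chain' (· < ·) := fun e he => hstr e (by simp [he])
    have hrbdd : ∀ e ∈ rest, ∀ x ∈ e, 1 ≤ x ∧ x ≤ 2 * n :=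
      fun e he => hbdd e (by simp [he])
    have hrch : rest.Chain' S17.colRel := hch'.tail
    have hdom : ∀ e ∈ rest, e.length ≤ c.length ∧
        ∀ r < e.length, c.getD r 0 ≤ e.getD r 0 := by
      haveI : Trans S17.colRel S17.colRel S17.colRel :=
        ⟨fun hab hbc => ⟨le_trans hbc.1 hab.1,
          fun r hr => le_trans (hab.2 r (lt_of_lt_of_le hr hbc.1)) (hbc.2 r hr)⟩⟩
      have hp := List.isChain_iff_pairwise.mp hch'
      exact fun e he => (List.pairwise_cons.mp hp).1 e he
    obtain ⟨d1, d2, d3, d4, d5⟩ :=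
      S17.drive hcstr b rest 0 hbch hbmem hbbdd hrne hrstr hrbdd hrch hdom
        (fun h => S17.newRow_pos _ _)
    have hlam : ∀ i, 1 ≤ i → part lam i = rowLen rest i + if i ≤ c.length then 1 else 0 := by
      intro i hi
      rw [← hsh i hi, S17.rowLen_cons]
    rw [hsuc]
    refine ⟨⟨?_, ?_⟩, ?_⟩
    · intro i hi
      rw [hlam i hi]
      rcases le_or_gt i c.length with h | h
      · have := d2 i hi
        rw [if_pos h]
        omega
      · have := d4 i h
        rw [if_neg (by omega)]
        omega
    · intro i hi
      rw [hlam i hi]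
      have := d3 i hi
      split_ifs <;> omega
    · constructor
      · intro heq
        have hS2 : (Finset.Icc 1 c.length).sum (fun i => part lam i) =
            (Finset.Icc 1 c.length).sum (fun i => rowLen rest i) + c.length := by
          have hcong : ∀ i ∈ Finset.Icc 1 c.length, part lam i = rowLen rest i + 1 := by
            intro i hi
            rw [Finset.mem_Icc] at hi
            rw [hlam i hi.1, if_pos hi.2]
          rw [Finset.sum_congr rfl hcong, Finset.sum_add_distrib]
          simp [Nat.card_Icc]
        have hS3 : (Finset.Icc 1 c.length).sum (fun i => rowLen (insertCol b rest) i) =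
            (Finset.Icc 1 c.length).sum (fun i => part lam i) := by
          apply Finset.sum_congr rfl
          intro i hi
          rw [Finset.mem_Icc] at hi
          exact heq i hi.1
        have hblen : b.length = c.length := by omega
        have hbc : b = c := hbsub.eq_of_length hblen
        rw [hbc]
        have hrec := S17.reconstruct (c :: rest) ⟨hne, hstr, hbdd, hch⟩ (by simp)
        simpa using hrec
      · intro heq i hi
        rw [heq]
        exact hsh i hi
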